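/- Let α ∈ (0,1), T > 0, let u ∈ C¹([0,T];ℝ), and let H ∈ C¹(ℝ). Then for every t ∈ (0,T] the functions g_{1−α} ∗ u and g_{1−α} ∗ (H∘u) are differentiable at t, and the fundamental identity holds with the singular kernel g_{1−α}: H'(u(t)) · ∂_t^α u(t) = ∂_t^α (H∘u)(t) + (−H(u(t)) + H'(u(t))u(t))·g_{1−α}(t) + ∫₀ᵗ (H(u(t−s)) − H(u(t)) − H'(u(t))[u(t−s) − u(t)])·(α s^{−α−1}/Γ(1−α)) ds, where α s^{−α−1}/Γ(1−α) = −g_{1−α}'(s). -/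

import Mathlib

open MeasureTheory Set Filter

lemma exists_c1_extension {T : ℝ} (hT : 0 < T) (u u' : ℝ → ℝ)
    (hu : ∀ t ∈ Icc 0 T, HasDerivWithinAt u (u' t) (Icc 0 T) t)
    (hu' : ContinuousOn u' (Icc 0 T)) :
    ∃ v v' : ℝ → ℝ, (∀ x, HasDerivAt v (v' x) x) ∧ Continuous v' ∧
      (∀ x ∈ Icc 0 T, v x = u x) ∧ (∀ x ∈ Icc 0 T, v' x = u' x) := by
  set cl : ℝ → ℝ := fun x => max 0 (min x T) with hcl
  have hclmem : ∀ x, cl x ∈ Icc 0 T := fun x =>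
    ⟨le_max_left _ _, max_le (le_of_lt hT) (min_le_right _ _)⟩
  have hcl_of_mem : ∀ x ∈ Icc 0 T, cl x = x := by
    intro x hx; simp [hcl, min_eq_left hx.2, max_eq_right hx.1]
  refine ⟨fun x => if x < 0 then u 0 + u' 0 * x else if x ≤ T then u x else u T + u' T * (x - T),
    fun x => u' (cl x), ?_, ?_, ?_, ?_⟩
  · intro x
    set v : ℝ → ℝ := fun x => if x < 0 then u 0 + u' 0 * x else if x ≤ T then u x else u T + u' T * (x - T) with hv
    show HasDerivAt v (u' (cl x)) x
    have hv_eq : ∀ y ∈ Icc 0 T, v y = u y := by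
      intro y hy; simp [hv, not_lt.mpr hy.1, hy.2]
    rcases lt_trichotomy x 0 with h0 | h0 | h0
    · -- x < 0 : v is linear near x
      have hder : HasDerivAt (fun y => u 0 + u' 0 * y) (u' 0) x := by
        simpa using ((hasDerivAt_id x).const_mul (u' 0)).const_add (u 0)
      have hx : cl x = 0 := by
        have : min x T ≤ 0 := le_trans (min_le_left _ _) h0.le
        simp [hcl, max_eq_left this]
      rw [hx]
      refine hder.congr_of_eventuallyEq ?_
      filter_upwards [eventually_lt_nhds h0] with y hy
      simp [hv, hy]
    · -- x = 0
      subst h0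
      rw [hcl_of_mem 0 ⟨le_refl _, hT.le⟩]
      have hleft : HasDerivWithinAt v (u' 0) (Iic 0) 0 := by
        have hlin : HasDerivWithinAt (fun y => u 0 + u' 0 * y) (u' 0) (Iic 0) 0 := by
          simpa using (((hasDerivAt_id (0:ℝ)).const_mul (u' 0)).const_add (u 0)).hasDerivWithinAt
        refine hlin.congr (fun y hy => ?_) ?_
        · rcases (mem_Iic.mp hy).lt_or_eq with h | h
          · simp [hv, h]
          · subst h; simp [hv, hT.le]
        · simp [hv, hT.le]
      have hright : HasDerivWithinAt v (u' 0) (Ici 0) 0 := by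
        have h1 : HasDerivWithinAt u (u' 0) (Icc 0 T) 0 := hu 0 ⟨le_refl _, hT.le⟩
        have h2 : HasDerivWithinAt v (u' 0) (Icc 0 T) 0 :=
          h1.congr (fun y hy => hv_eq y hy) (hv_eq 0 ⟨le_refl _, hT.le⟩)
        refine h2.mono_of_mem_nhdsWithin ?_
        rw [(Ici_inter_Iic (a:=(0:ℝ)) (b:=T)).symm]
        exact inter_mem_nhdsWithin _ (Iic_mem_nhds hT)
      have := hleft.union hright
      rwa [Iic_union_Ici, hasDerivWithinAt_univ] at this
    · rcases lt_trichotomy x T with hxT | hxT | hxT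
      · -- interior
        have hmem : Icc (0:ℝ) T ∈ nhds x := Icc_mem_nhds h0 hxT
        have hder : HasDerivAt u (u' x) x := (hu x ⟨h0.le, hxT.le⟩).hasDerivAt hmem
        rw [hcl_of_mem x ⟨h0.le, hxT.le⟩]
        refine hder.congr_of_eventuallyEq ?_
        filter_upwards [hmem] with y hy using hv_eq y hy
      · -- x = T
        subst hxT
        rw [hcl_of_mem x ⟨h0.le, le_refl _⟩]
        have hleft : HasDerivWithinAt v (u' x) (Iic x) x := by
          have h1 : HasDerivWithinAt u (u' x) (Icc 0 x) x := hu x ⟨h0.le, le_refl _⟩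
          have h2 : HasDerivWithinAt v (u' x) (Icc 0 x) x :=
            h1.congr (fun y hy => hv_eq y hy) (hv_eq x ⟨h0.le, le_refl _⟩)
          refine h2.mono_of_mem_nhdsWithin ?_
          rw [(Ici_inter_Iic (a:=(0:ℝ)) (b:=x)).symm, inter_comm]
          exact inter_mem_nhdsWithin _ (Ici_mem_nhds h0)
        have hright : HasDerivWithinAt v (u' x) (Ici x) x := by
          have hlin : HasDerivWithinAt (fun y => u x + u' x * (y - x)) (u' x) (Ici x) x := by
            simpa using ((((hasDerivAt_id x).sub_const x).const_mul (u' x)).const_add (u x)).hasDerivWithinAt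
          refine hlin.congr (fun y hy => ?_) ?_
          · rcases (mem_Ici.mp hy).lt_or_eq with h | h
            · simp [hv, not_lt.mpr (h0.le.trans hy), not_le.mpr h]
            · rw [← h]; simp [hv, not_lt.mpr h0.le]
          · simp [hv, not_lt.mpr h0.le]
        have := hleft.union hright
        rwa [Iic_union_Ici, hasDerivWithinAt_univ] at this
      · -- x > T
        have hder : HasDerivAt (fun y => u T + u' T * (y - T)) (u' T) x := by
          simpa using (((hasDerivAt_id x).sub_const T).const_mul (u' T)).const_add (u T)
        have hx : cl x = T := by
          simp [hcl, min_eq_right hxT.le, max_eq_right hT.le]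
        rw [hx]
        refine hder.congr_of_eventuallyEq ?_
        filter_upwards [eventually_gt_nhds hxT] with y hy
        simp [hv, not_lt.mpr (hT.le.trans hy.le), not_le.mpr hy]
  · exact hu'.comp_continuous (continuous_const.max (continuous_id.min continuous_const)) hclmem
  · intro x hx; simp [not_lt.mpr hx.1, hx.2]
  · intro x hx; show u' (cl x) = u' x; rw [hcl_of_mem x hx]

/-- The standard kernel `g_β(t) = t^(β-1)/Γ(β)`. -/
noncomputable def stdKernel (β t : ℝ) : ℝ := t ^ (β - 1) / Real.Gamma β

lemma stdKernel_eq (α x : ℝ) : stdKernel (1 - α) x = x ^ (-α) / Real.Gamma (1 - α) := by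
  unfold stdKernel; rw [show (1 - α - 1 : ℝ) = -α by ring]

lemma one_sub_rpow_II {α : ℝ} (hα0 : -1 < -α) :
    IntervalIntegrable (fun σ : ℝ => (1 - σ) ^ (-α)) volume 0 1 := by
  have h := (intervalIntegral.intervalIntegrable_rpow' (a := 0) (b := 1) (r := -α)
    hα0).comp_sub_left 1
  simpa using h.symm

/-- scaling substitution: `∫₀^τ k(τ-s) f(s) ds = τ · (τ^(-α)/Γ · ∫₀¹ (1-σ)^(-α) f(στ) dσ)`. -/
lemma conv_scale {α : ℝ} (f : ℝ → ℝ) {τ : ℝ} (hτ : 0 < τ) :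
    (∫ s in (0:ℝ)..τ, stdKernel (1 - α) (τ - s) * f s)
      = τ * (τ ^ (-α) / Real.Gamma (1 - α) * ∫ σ in (0:ℝ)..1, (1 - σ) ^ (-α) * f (σ * τ)) := by
  have h1 := intervalIntegral.smul_integral_comp_mul_right
    (a := 0) (b := 1) (fun s => stdKernel (1 - α) (τ - s) * f s) τ
  simp only [zero_mul, one_mul, smul_eq_mul] at h1
  rw [← h1]
  congr 1
  have h2 : (∫ σ in (0:ℝ)..1, stdKernel (1 - α) (τ - σ * τ) * f (σ * τ))
      = ∫ σ in (0:ℝ)..1, (τ ^ (-α) / Real.Gamma (1 - α)) * ((1 - σ) ^ (-α) * f (σ * τ)) := by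
    apply intervalIntegral.integral_congr
    intro σ hσ
    rw [uIcc_of_le (by norm_num : (0:ℝ) ≤ 1)] at hσ
    have h1σ : (0:ℝ) ≤ 1 - σ := by linarith [hσ.2]
    show stdKernel (1 - α) (τ - σ * τ) * f (σ * τ)
      = τ ^ (-α) / Real.Gamma (1 - α) * ((1 - σ) ^ (-α) * f (σ * τ))
    rw [stdKernel_eq, show τ - σ * τ = (1 - σ) * τ by ring, Real.mul_rpow h1σ hτ.le]
    ring
  rw [h2, intervalIntegral.integral_const_mul]

lemma conv_hasDerivAt {α : ℝ} (hα0 : 0 < α) (hα1 : α < 1) (w w' : ℝ → ℝ)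
    (hw : ∀ x, HasDerivAt w (w' x) x) (hw' : Continuous w') {t : ℝ} (ht : 0 < t) :
    HasDerivAt (fun τ => ∫ s in (0:ℝ)..τ, stdKernel (1 - α) (τ - s) * w s)
      (stdKernel (1 - α) t * w 0 + ∫ s in (0:ℝ)..t, stdKernel (1 - α) s * w' (t - s)) t := by
  have hαII : (-1:ℝ) < -α := by linarith
  have hwc : Continuous w := continuous_iff_continuousAt.mpr fun x => (hw x).continuousAt
  -- ascribed continuity facts
  have hcw : Continuous fun σ : ℝ => w (σ * t) := hwc.comp (continuous_id.mul continuous_const)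
  have hcw' : Continuous fun σ : ℝ => w' (σ * t) := hw'.comp (continuous_id.mul continuous_const)
  have hcσw' : Continuous fun σ : ℝ => σ * w' (σ * t) := continuous_id.mul hcw'
  have hII : ∀ (g : ℝ → ℝ), Continuous g →
      IntervalIntegrable (fun σ => (1 - σ) ^ (-α) * g σ) volume 0 1 := fun g hg =>
    (one_sub_rpow_II hαII).mul_continuousOn hg.continuousOn
  have intGt : IntervalIntegrable (fun σ : ℝ => (1 - σ) ^ (-α) * w (σ * t)) volume 0 1 :=
    hII _ hcw
  have intJ : IntervalIntegrable (fun σ : ℝ => (1 - σ) ^ (-α) * w' (σ * t)) volume 0 1 :=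
    hII _ hcw'
  have intG'' : IntervalIntegrable (fun σ : ℝ => (1 - σ) ^ (-α) * (σ * w' (σ * t))) volume 0 1 :=
    hII _ hcσw'
  set G : ℝ → ℝ := fun τ => ∫ σ in (0:ℝ)..1, (1 - σ) ^ (-α) * w (σ * τ) with hGdef
  -- Step 2: derivative of G at t
  obtain ⟨C, hC⟩ := (isCompact_Icc (a := -(t+1)) (b := t+1)).exists_bound_of_continuousOn
    (hw'.continuousOn)
  have hmem : ∀ (x σ : ℝ), x ∈ Metric.ball t 1 → σ ∈ Set.uIoc (0:ℝ) 1 →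
      σ * x ∈ Icc (-(t+1)) (t+1) := by
    intro x σ hx hσ
    rw [uIoc_of_le (by norm_num : (0:ℝ) ≤ 1)] at hσ
    have hxt : |x - t| < 1 := by rwa [Metric.mem_ball, Real.dist_eq] at hx
    have h2 : |x| < t + 1 := by
      have h3 : |x| ≤ |x - t| + |t| := by
        calc |x| = |(x - t) + t| := by ring_nf
          _ ≤ |x - t| + |t| := abs_add_le _ _
      rw [abs_of_pos ht] at h3; linarith
    have hσ1 : |σ| ≤ 1 := abs_le.mpr ⟨by linarith [hσ.1], hσ.2⟩
    have h4 : |σ * x| ≤ t + 1 := by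
      rw [abs_mul]
      calc |σ| * |x| ≤ 1 * |x| := mul_le_mul_of_nonneg_right hσ1 (abs_nonneg x)
        _ ≤ t + 1 := by rw [one_mul]; linarith
    have h5 := abs_le.mp h4
    exact ⟨by linarith [h5.1], h5.2⟩
  have hGd : HasDerivAt G (∫ σ in (0:ℝ)..1, (1 - σ) ^ (-α) * (σ * w' (σ * t))) t := by
    have hIIx : ∀ x : ℝ, IntervalIntegrable (fun σ : ℝ => (1 - σ) ^ (-α) * w (σ * x))
        volume 0 1 := fun x => hII _ (hwc.comp (continuous_id.mul continuous_const))
    have hmeas : ∀ x : ℝ, AEStronglyMeasurable (fun σ => (1 - σ) ^ (-α) * w (σ * x))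
        (volume.restrict (Set.uIoc (0:ℝ) 1)) := by
      intro x
      rw [uIoc_of_le (by norm_num : (0:ℝ) ≤ 1)]
      exact (hIIx x).1.aestronglyMeasurable
    have hmeas' : AEStronglyMeasurable (fun σ => (1 - σ) ^ (-α) * (σ * w' (σ * t)))
        (volume.restrict (Set.uIoc (0:ℝ) 1)) := by
      rw [uIoc_of_le (by norm_num : (0:ℝ) ≤ 1)]
      exact intG''.1.aestronglyMeasurable
    have hres := intervalIntegral.hasDerivAt_integral_of_dominated_loc_of_deriv_le
      (F := fun x σ => (1 - σ) ^ (-α) * w (σ * x))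
      (F' := fun x σ => (1 - σ) ^ (-α) * (σ * w' (σ * x)))
      (x₀ := t) (a := 0) (b := 1) (s := Metric.ball t 1)
      (bound := fun σ => (1 - σ) ^ (-α) * C) (Metric.ball_mem_nhds t one_pos)
      (Filter.Eventually.of_forall hmeas) (hIIx t) hmeas' ?_ ?_ ?_
    · exact hres.2
    · -- bound
      apply MeasureTheory.ae_of_all
      intro σ hσ x hx
      have hσ' := hσ
      rw [uIoc_of_le (by norm_num : (0:ℝ) ≤ 1)] at hσ'
      have h1σ : (0:ℝ) ≤ 1 - σ := by linarith [hσ'.2]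
      have hb : |w' (σ * x)| ≤ C := hC (σ * x) (hmem x σ hx hσ)
      rw [Real.norm_eq_abs, abs_mul, abs_of_nonneg (Real.rpow_nonneg h1σ _), abs_mul]
      have hσ1 : |σ| ≤ 1 := abs_le.mpr ⟨by linarith [hσ'.1], hσ'.2⟩
      calc (1 - σ) ^ (-α) * (|σ| * |w' (σ * x)|)
          ≤ (1 - σ) ^ (-α) * (1 * C) := by
            apply mul_le_mul_of_nonneg_left _ (Real.rpow_nonneg h1σ _)
            exact mul_le_mul hσ1 hb (abs_nonneg _) one_pos.le
        _ = (1 - σ) ^ (-α) * C := by ring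
    · exact (one_sub_rpow_II hαII).mul_const C
    · -- ae derivative
      apply MeasureTheory.ae_of_all
      intro σ _ x _
      have hinner : HasDerivAt (fun y : ℝ => σ * y) σ x := by
        simpa using (hasDerivAt_id x).const_mul σ
      have houter : HasDerivAt (fun y : ℝ => w (σ * y)) (w' (σ * x) * σ) x :=
        (hw (σ * x)).comp x hinner
      have h := houter.const_mul ((1 - σ) ^ (-α))
      refine h.congr_deriv ?_
      ring
  set G'' := ∫ σ in (0:ℝ)..1, (1 - σ) ^ (-α) * (σ * w' (σ * t)) with hG''def
  -- Step 3: derivative of the product form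
  have h1 : HasDerivAt (fun τ : ℝ => τ ^ (-α)) (-α * t ^ (-α - 1)) t :=
    Real.hasDerivAt_rpow_const (Or.inl ht.ne')
  have hprod : HasDerivAt (fun τ => τ * (τ ^ (-α) / Real.Gamma (1 - α) * G τ))
      (1 * (t ^ (-α) / Real.Gamma (1 - α) * G t)
        + t * ((-α * t ^ (-α - 1)) / Real.Gamma (1 - α) * G t
          + t ^ (-α) / Real.Gamma (1 - α) * G'')) t :=
    (hasDerivAt_id t).mul ((h1.div_const (Real.Gamma (1 - α))).mul hGd)
  have heq : (fun τ => ∫ s in (0:ℝ)..τ, stdKernel (1 - α) (τ - s) * w s)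
      =ᶠ[nhds t] (fun τ => τ * (τ ^ (-α) / Real.Gamma (1 - α) * G τ)) := by
    filter_upwards [eventually_gt_nhds ht] with τ hτ using conv_scale w hτ
  have hF := hprod.congr_of_eventuallyEq heq
  -- Step 4: identify the derivative value
  set J := ∫ σ in (0:ℝ)..1, (1 - σ) ^ (-α) * w' (σ * t) with hJdef
  set E' := ∫ σ in (0:ℝ)..1, (1 - σ) ^ (1 - α) * w' (σ * t) with hE'def
  have hcont1 : Continuous (fun σ : ℝ => (1 - σ) ^ (1 - α)) := by
    apply continuous_iff_continuousAt.mpr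
    intro σ
    exact (Real.continuousAt_rpow_const _ _ (Or.inr (by linarith))).comp
      (continuousAt_const.sub continuousAt_id)
  have int1 : IntervalIntegrable (fun σ : ℝ => (1 - σ) ^ (1 - α) * (w' (σ * t) * t))
      volume 0 1 := (hcont1.mul (hcw'.mul continuous_const)).continuousOn.intervalIntegrable
  have int2 : IntervalIntegrable (fun σ : ℝ => (1 - α) * ((1 - σ) ^ (-α) * w (σ * t)))
      volume 0 1 := intGt.const_mul _
  -- FTC identity
  have key : t * E' - (1 - α) * G t = 0 - w 0 := by
    have hφcont : ContinuousOn (fun σ : ℝ => (1 - σ) ^ (1 - α) * w (σ * t)) (Icc 0 1) :=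
      (hcont1.mul hcw).continuousOn
    have hφderiv : ∀ σ ∈ Ioo (0:ℝ) 1, HasDerivWithinAt
        (fun σ : ℝ => (1 - σ) ^ (1 - α) * w (σ * t))
        ((1 - σ) ^ (1 - α) * (w' (σ * t) * t) - (1 - α) * ((1 - σ) ^ (-α) * w (σ * t)))
        (Ioi σ) σ := by
      intro σ hσ
      have hne : (1:ℝ) - σ ≠ 0 := ne_of_gt (by linarith [hσ.2])
      have hinner : HasDerivAt (fun y : ℝ => 1 - y) (-1 : ℝ) σ := by
        simpa using (hasDerivAt_id σ).const_sub 1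
      have hA0 := (Real.hasDerivAt_rpow_const (x := 1 - σ) (p := 1 - α) (Or.inl hne)).comp σ hinner
      have hA : HasDerivAt (fun σ : ℝ => (1 - σ) ^ (1 - α)) (-((1 - α) * (1 - σ) ^ (-α))) σ := by
        refine hA0.congr_deriv ?_
        rw [show (1 - α - 1 : ℝ) = -α by ring]
        ring
      have hinner2 : HasDerivAt (fun y : ℝ => y * t) t σ := by
        simpa using (hasDerivAt_id σ).mul_const t
      have hB : HasDerivAt (fun σ : ℝ => w (σ * t)) (w' (σ * t) * t) σ :=
        (hw (σ * t)).comp σ hinner2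
      have h := hA.mul hB
      apply HasDerivAt.hasDerivWithinAt
      refine h.congr_deriv ?_
      ring
    have hFTC := intervalIntegral.integral_eq_sub_of_hasDeriv_right_of_le
      (by norm_num : (0:ℝ) ≤ 1) hφcont hφderiv (int1.sub int2)
    have hend : (fun σ : ℝ => (1 - σ) ^ (1 - α) * w (σ * t)) 1
        - (fun σ : ℝ => (1 - σ) ^ (1 - α) * w (σ * t)) 0 = 0 - w 0 := by
      simp [Real.zero_rpow (show (1:ℝ) - α ≠ 0 by linarith), Real.one_rpow]
    rw [hend] at hFTC
    rw [← hFTC, intervalIntegral.integral_sub int1 int2, intervalIntegral.integral_const_mul]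
    have hmul : (∫ σ in (0:ℝ)..1, (1 - σ) ^ (1 - α) * (w' (σ * t) * t))
        = (∫ σ in (0:ℝ)..1, ((1 - σ) ^ (1 - α) * w' (σ * t)) * t) := by
      apply intervalIntegral.integral_congr; intro σ _; show _ = _; ring_nf
    rw [hmul, intervalIntegral.integral_mul_const]
    show t * E' - (1 - α) * G t = E' * t - (1 - α) * G t
    ring
  -- E' = J - G''
  have hE'JG : E' = J - G'' := by
    rw [hE'def, hJdef, hG''def, ← intervalIntegral.integral_sub intJ intG'']
    apply intervalIntegral.integral_congr
    intro σ hσ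
    rw [uIcc_of_le (by norm_num : (0:ℝ) ≤ 1)] at hσ
    show (1 - σ) ^ (1 - α) * w' (σ * t)
      = (1 - σ) ^ (-α) * w' (σ * t) - (1 - σ) ^ (-α) * (σ * w' (σ * t))
    rcases eq_or_lt_of_le hσ.2 with h | h
    · subst h
      norm_num [Real.zero_rpow (show (1:ℝ) - α ≠ 0 by linarith),
        Real.zero_rpow (show -α ≠ 0 by intro hc; rw [neg_eq_zero] at hc; exact hα0.ne' hc)]
    · have hpos : (0:ℝ) < 1 - σ := by linarith
      have hx : (1 - σ) ^ (1 - α) = (1 - σ) ^ (-α) * (1 - σ) := by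
        rw [show (1 : ℝ) - α = -α + 1 by ring, Real.rpow_add_one (ne_of_gt hpos)]
      rw [hx]
      ring
  -- RHS integral in scaled form
  have hRHS : (∫ s in (0:ℝ)..t, stdKernel (1 - α) s * w' (t - s))
      = t * (t ^ (-α) / Real.Gamma (1 - α) * J) := by
    have hrefl := intervalIntegral.integral_comp_sub_left (a := 0) (b := t)
      (fun s => stdKernel (1 - α) (t - s) * w' s) t
    simp only [sub_sub_cancel, sub_zero, sub_self] at hrefl
    rw [hrefl]
    exact conv_scale w' ht
  -- conclude
  have hpow : t ^ (-α - 1) * t = t ^ (-α) := by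
    rw [← Real.rpow_add_one ht.ne', show (-α - 1 + 1 : ℝ) = -α by ring]
  have hgoal : w 0 + t * J = (1 - α) * G t + t * G'' := by
    linear_combination key - t * hE'JG
  have hval : stdKernel (1 - α) t * w 0 + (∫ s in (0:ℝ)..t, stdKernel (1 - α) s * w' (t - s))
      = 1 * (t ^ (-α) / Real.Gamma (1 - α) * G t)
        + t * ((-α * t ^ (-α - 1)) / Real.Gamma (1 - α) * G t
          + t ^ (-α) / Real.Gamma (1 - α) * G'') := by
    rw [hRHS, stdKernel_eq]
    linear_combination (t ^ (-α) / Real.Gamma (1 - α)) * hgoal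
      + (α * G t / Real.Gamma (1 - α)) * hpow
  rw [hval]
  exact hF

lemma IBP_remainder {α : ℝ} (hα0 : 0 < α) (hα1 : α < 1) (v v' H H' : ℝ → ℝ)
    (hv : ∀ x, HasDerivAt v (v' x) x) (hv' : Continuous v')
    (hH : ∀ x : ℝ, HasDerivAt H (H' x) x) (hH' : Continuous H') {t : ℝ} (ht : 0 < t) :
    (∫ s in (0:ℝ)..t, (H (v (t - s)) - H (v t) - H' (v t) * (v (t - s) - v t))
        * (α * s ^ (-α - 1) / Real.Gamma (1 - α)))
      = -((H (v 0) - H (v t) - H' (v t) * (v 0 - v t)) * stdKernel (1 - α) t)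
        + ∫ s in (0:ℝ)..t, (H' (v t) - H' (v (t - s))) * v' (t - s) * stdKernel (1 - α) s := by
  have hΓ : 0 < Real.Gamma (1 - α) := Real.Gamma_pos_of_pos (by linarith)
  have hαII : (-1:ℝ) < -α := by linarith
  have hvc : Continuous v := continuous_iff_continuousAt.mpr fun x => (hv x).continuousAt
  set c := H' (v t) with hc
  set R : ℝ → ℝ := fun s => H (v (t - s)) - H (v t) - c * (v (t - s) - v t) with hR
  set R' : ℝ → ℝ := fun s => (c - H' (v (t - s))) * v' (t - s) with hR'
  have hRd : ∀ s : ℝ, HasDerivAt R (R' s) s := by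
    intro s
    have h1 : HasDerivAt (fun s : ℝ => t - s) (-1 : ℝ) s := by
      simpa using (hasDerivAt_id s).const_sub t
    have hin : HasDerivAt (fun s : ℝ => v (t - s)) (v' (t - s) * (-1)) s :=
      (hv (t - s)).comp s h1
    have hHo : HasDerivAt (fun s : ℝ => H (v (t - s))) (H' (v (t - s)) * (v' (t - s) * (-1))) s :=
      (hH (v (t - s))).comp s hin
    have h2 := (hHo.sub_const (H (v t))).sub ((hin.sub_const (v t)).const_mul c)
    refine h2.congr_deriv ?_
    show _ = (c - H' (v (t - s))) * v' (t - s)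
    ring
  have hRcont : Continuous R := continuous_iff_continuousAt.mpr fun x => (hRd x).continuousAt
  have hR'cont : Continuous R' :=
    (continuous_const.sub (hH'.comp (hvc.comp (continuous_const.sub continuous_id)))).mul
      (hv'.comp (continuous_const.sub continuous_id))
  have hR0 : R 0 = 0 := by simp [hR]
  obtain ⟨L, hL⟩ := (isCompact_Icc (a := (0:ℝ)) (b := t)).exists_bound_of_continuousOn
    hR'cont.continuousOn
  have hLip : ∀ s ∈ Icc (0:ℝ) t, |R s| ≤ L * s := by
    intro s hs
    have h := Convex.norm_image_sub_le_of_norm_hasDerivWithin_le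
      (f := R) (f' := R') (s := Icc (0:ℝ) t) (C := L)
      (fun x _ => (hRd x).hasDerivWithinAt) hL (convex_Icc _ _)
      ⟨le_refl 0, ht.le⟩ hs
    rw [hR0, sub_zero, sub_zero, Real.norm_eq_abs, Real.norm_eq_abs, abs_of_nonneg hs.1] at h
    exact h
  set ψ : ℝ → ℝ := fun s => R s * (s ^ (-α) / Real.Gamma (1 - α)) with hψ
  set f1 : ℝ → ℝ := fun s => R' s * (s ^ (-α) / Real.Gamma (1 - α)) with hf1
  set f2 : ℝ → ℝ := fun s => R s * (α * s ^ (-α - 1) / Real.Gamma (1 - α)) with hf2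
  have hkII : IntervalIntegrable (fun s : ℝ => s ^ (-α) / Real.Gamma (1 - α)) volume 0 t :=
    (intervalIntegral.intervalIntegrable_rpow' hαII).div_const _
  have int1 : IntervalIntegrable f1 volume 0 t := hkII.continuousOn_mul hR'cont.continuousOn
  have int2 : IntervalIntegrable f2 volume 0 t := by
    rw [intervalIntegrable_iff_integrableOn_Ioc_of_le ht.le]
    have hmeas : AEStronglyMeasurable f2 (volume.restrict (Ioc (0:ℝ) t)) := by
      apply ContinuousOn.aestronglyMeasurable _ measurableSet_Ioc
      apply hRcont.continuousOn.mul
      intro s hs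
      have hcw : ContinuousWithinAt (fun x : ℝ => x ^ (-α - 1)) (Ioc (0:ℝ) t) s :=
        (Real.continuousAt_rpow_const s (-α - 1)
          (Or.inl (ne_of_gt hs.1))).continuousWithinAt
      exact (hcw.const_mul α).div_const _
    have hgint : IntegrableOn (fun s : ℝ => (L * α / Real.Gamma (1 - α)) * s ^ (-α))
        (Ioc (0:ℝ) t) volume := by
      rw [← intervalIntegrable_iff_integrableOn_Ioc_of_le ht.le]
      exact (intervalIntegral.intervalIntegrable_rpow' hαII).const_mul _
    apply Integrable.mono' hgint hmeas
    rw [ae_restrict_iff' measurableSet_Ioc]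
    apply ae_of_all
    intro s hs
    have hs0 : (0:ℝ) < s := hs.1
    have hpow : s ^ (-α - 1) * s = s ^ (-α) := by
      rw [← Real.rpow_add_one (ne_of_gt hs0), show (-α - 1 + 1 : ℝ) = -α by ring]
    have hφpos : 0 ≤ α * s ^ (-α - 1) / Real.Gamma (1 - α) := by
      apply div_nonneg _ hΓ.le
      exact mul_nonneg hα0.le (Real.rpow_nonneg hs0.le _)
    have hRb : |R s| ≤ L * s := hLip s ⟨hs0.le, hs.2⟩
    calc ‖f2 s‖ = |R s| * (α * s ^ (-α - 1) / Real.Gamma (1 - α)) := by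
          rw [show f2 s = R s * (α * s ^ (-α - 1) / Real.Gamma (1 - α)) from rfl,
            Real.norm_eq_abs, abs_mul, abs_of_nonneg hφpos]
      _ ≤ (L * s) * (α * s ^ (-α - 1) / Real.Gamma (1 - α)) :=
          mul_le_mul_of_nonneg_right hRb hφpos
      _ = (L * α / Real.Gamma (1 - α)) * (s ^ (-α - 1) * s) := by ring
      _ = (L * α / Real.Gamma (1 - α)) * s ^ (-α) := by rw [hpow]
  -- continuity of ψ on [0, t]
  have hψ0 : ψ 0 = 0 := by simp [hψ, hR0]
  have hcontψ : ContinuousOn ψ (Icc 0 t) := by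
    intro s hs
    rcases eq_or_lt_of_le hs.1 with h0 | h0
    · -- s = 0
      rw [← h0]
      rw [ContinuousWithinAt, hψ0]
      have hval : R' 0 = 0 := by simp [hR', hc]
      have hslope : Tendsto (slope R 0) (nhdsWithin 0 {(0:ℝ)}ᶜ) (nhds 0) := by
        have h := hasDerivAt_iff_tendsto_slope.mp (hRd 0)
        rwa [hval] at h
      have hsub : Icc (0:ℝ) t ⊆ {0} ∪ Ioi 0 := by
        intro x hx
        rcases eq_or_lt_of_le hx.1 with h | h
        · left; simp [← h]
        · right; exact h
      apply Tendsto.mono_left _ (nhdsWithin_mono 0 hsub)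
      rw [nhdsWithin_union, tendsto_sup]
      constructor
      · rw [nhdsWithin_singleton]
        have := tendsto_pure_nhds ψ 0
        rwa [hψ0] at this
      · have ha : Tendsto (slope R 0) (nhdsWithin 0 (Ioi 0)) (nhds 0) :=
          hslope.mono_left (nhdsWithin_mono 0 (fun x hx => ne_of_gt hx))
        have hb : Tendsto (fun s : ℝ => s ^ (1 - α) / Real.Gamma (1 - α))
            (nhdsWithin 0 (Ioi 0)) (nhds 0) := by
          have hco := (Real.continuousAt_rpow_const 0 (1 - α)
            (Or.inr (by linarith))).continuousWithinAt (s := Ioi 0)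
          have h0' : (0:ℝ) ^ (1 - α) = 0 := Real.zero_rpow (by linarith)
          have := hco.div_const (Real.Gamma (1 - α))
          rw [ContinuousWithinAt] at this
          rw [h0'] at this
          simpa using this
        have h2 := ha.mul hb
        rw [mul_zero] at h2
        apply h2.congr'
        filter_upwards [self_mem_nhdsWithin] with s hs0
        have hsne : s ≠ 0 := ne_of_gt hs0
        rw [slope_def_field, hR0, sub_zero, sub_zero]
        show R s / s * (s ^ (1 - α) / Real.Gamma (1 - α)) = ψ s
        have hpow : s ^ (1 - α) = s ^ (-α) * s := by
          rw [show (1 : ℝ) - α = -α + 1 by ring, Real.rpow_add_one hsne]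
        rw [hψ, hpow]
        field_simp
    · -- s > 0
      apply ContinuousAt.continuousWithinAt
      exact hRcont.continuousAt.mul
        ((Real.continuousAt_rpow_const s (-α) (Or.inl (ne_of_gt h0))).div_const _)
  -- derivative of ψ on (0, t)
  have hderivψ : ∀ s ∈ Ioo (0:ℝ) t, HasDerivWithinAt ψ (f1 s - f2 s) (Ioi s) s := by
    intro s hs
    have hk : HasDerivAt (fun x : ℝ => x ^ (-α) / Real.Gamma (1 - α))
        (-α * s ^ (-α - 1) / Real.Gamma (1 - α)) s :=
      (Real.hasDerivAt_rpow_const (Or.inl (ne_of_gt hs.1))).div_const _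
    have h := (hRd s).mul hk
    apply HasDerivAt.hasDerivWithinAt
    refine h.congr_deriv ?_
    show _ = R' s * (s ^ (-α) / Real.Gamma (1 - α)) - R s * (α * s ^ (-α - 1) / Real.Gamma (1 - α))
    ring
  have hFTC := intervalIntegral.integral_eq_sub_of_hasDeriv_right_of_le ht.le hcontψ hderivψ
    (int1.sub int2)
  rw [intervalIntegral.integral_sub int1 int2, hψ0, sub_zero] at hFTC
  have hψt : ψ t = R t * stdKernel (1 - α) t := by
    rw [hψ, stdKernel_eq]
  have hRt : R t = H (v 0) - H (v t) - c * (v 0 - v t) := by simp [hR]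
  have hgoalL : (∫ s in (0:ℝ)..t, (H (v (t - s)) - H (v t) - c * (v (t - s) - v t))
      * (α * s ^ (-α - 1) / Real.Gamma (1 - α))) = ∫ s in (0:ℝ)..t, f2 s :=
    intervalIntegral.integral_congr fun s _ => by simp only [hf2, hR]
  have hI3 : (∫ s in (0:ℝ)..t, (c - H' (v (t - s))) * v' (t - s) * stdKernel (1 - α) s)
      = ∫ s in (0:ℝ)..t, f1 s := by
    apply intervalIntegral.integral_congr
    intro s _
    show (c - H' (v (t - s))) * v' (t - s) * stdKernel (1 - α) s = f1 s
    simp only [hf1, hR']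
    rw [stdKernel_eq]
  rw [hgoalL, hI3, ← hRt]
  linarith [hFTC, hψt.symm ▸ hFTC]

/-- **The fundamental identity with the singular kernel `g_{1-α}`**: for `u ∈ C¹([0,T])`
and `H ∈ C¹(ℝ)`, for every `t ∈ (0,T]` the convolutions `g_{1-α} ∗ u` and
`g_{1-α} ∗ H(u)` are differentiable at `t` (within `[0,T]`) with derivatives
`∂ₜᵅ u(t)` and `∂ₜᵅ (H∘u)(t)` satisfying the fundamental identity, where
`-g_{1-α}'(s) = α s^(-α-1)/Γ(1-α)`. -/
theorem fundamental_identity_singular_kernel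
    (α T : ℝ) (hα : α ∈ Ioo (0:ℝ) 1) (hT : 0 < T)
    (u u' : ℝ → ℝ)
    (hu : ∀ t ∈ Icc 0 T, HasDerivWithinAt u (u' t) (Icc 0 T) t)
    (hu' : ContinuousOn u' (Icc 0 T))
    (H H' : ℝ → ℝ)
    (hH : ∀ x : ℝ, HasDerivAt H (H' x) x)
    (hH'cont : Continuous H') :
    ∀ t ∈ Ioc 0 T, ∃ Du DH : ℝ,
      HasDerivWithinAt (fun τ => ∫ s in (0:ℝ)..τ, stdKernel (1 - α) (τ - s) * u s)
        Du (Icc 0 T) t ∧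
      HasDerivWithinAt (fun τ => ∫ s in (0:ℝ)..τ, stdKernel (1 - α) (τ - s) * H (u s))
        DH (Icc 0 T) t ∧
      H' (u t) * Du
        = DH + (-(H (u t)) + H' (u t) * u t) * stdKernel (1 - α) t
          + ∫ s in (0:ℝ)..t,
              (H (u (t - s)) - H (u t) - H' (u t) * (u (t - s) - u t))
                * (α * s ^ (-α - 1) / Real.Gamma (1 - α)) := by
  obtain ⟨hα0, hα1⟩ := hα
  intro t ht
  obtain ⟨v, v', hvd, hv'c, hvu, hv'u⟩ := exists_c1_extension hT u u' hu hu'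
  have hvc : Continuous v := continuous_iff_continuousAt.mpr fun x => (hvd x).continuousAt
  have htmem : t ∈ Icc (0:ℝ) T := ⟨ht.1.le, ht.2⟩
  have hut : u t = v t := (hvu t htmem).symm
  have hDu := conv_hasDerivAt hα0 hα1 v v' hvd hv'c ht.1
  have hwH : ∀ x : ℝ, HasDerivAt (fun x => H (v x)) (H' (v x) * v' x) x :=
    fun x => (hH (v x)).comp x (hvd x)
  have hwHc : Continuous fun x => H' (v x) * v' x := (hH'cont.comp hvc).mul hv'c
  have hDH := conv_hasDerivAt hα0 hα1 (fun x => H (v x)) (fun x => H' (v x) * v' x) hwH hwHc ht.1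
  refine ⟨stdKernel (1 - α) t * v 0 + ∫ s in (0:ℝ)..t, stdKernel (1 - α) s * v' (t - s),
    stdKernel (1 - α) t * H (v 0)
      + ∫ s in (0:ℝ)..t, stdKernel (1 - α) s * (H' (v (t - s)) * v' (t - s)), ?_, ?_, ?_⟩
  · -- derivative of g ∗ u
    have hcongr : ∀ τ ∈ Icc (0:ℝ) T, (∫ s in (0:ℝ)..τ, stdKernel (1 - α) (τ - s) * u s)
        = ∫ s in (0:ℝ)..τ, stdKernel (1 - α) (τ - s) * v s := by
      intro τ hτ
      apply intervalIntegral.integral_congr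
      intro s hs
      rw [uIcc_of_le hτ.1] at hs
      have hsmem : s ∈ Icc (0:ℝ) T := ⟨hs.1, le_trans hs.2 hτ.2⟩
      show stdKernel (1 - α) (τ - s) * u s = stdKernel (1 - α) (τ - s) * v s
      rw [hvu s hsmem]
    exact (hDu.hasDerivWithinAt).congr hcongr (hcongr t htmem)
  · -- derivative of g ∗ H(u)
    have hcongr : ∀ τ ∈ Icc (0:ℝ) T, (∫ s in (0:ℝ)..τ, stdKernel (1 - α) (τ - s) * H (u s))
        = ∫ s in (0:ℝ)..τ, stdKernel (1 - α) (τ - s) * H (v s) := by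
      intro τ hτ
      apply intervalIntegral.integral_congr
      intro s hs
      rw [uIcc_of_le hτ.1] at hs
      have hsmem : s ∈ Icc (0:ℝ) T := ⟨hs.1, le_trans hs.2 hτ.2⟩
      show stdKernel (1 - α) (τ - s) * H (u s) = stdKernel (1 - α) (τ - s) * H (v s)
      rw [hvu s hsmem]
    exact (hDH.hasDerivWithinAt).congr hcongr (hcongr t htmem)
  · -- the fundamental identity
    have hIBP := IBP_remainder hα0 hα1 v v' H H' hvd hv'c hH hH'cont ht.1
    have hJ : (∫ s in (0:ℝ)..t, (H (u (t - s)) - H (u t) - H' (u t) * (u (t - s) - u t))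
          * (α * s ^ (-α - 1) / Real.Gamma (1 - α)))
        = ∫ s in (0:ℝ)..t, (H (v (t - s)) - H (v t) - H' (v t) * (v (t - s) - v t))
          * (α * s ^ (-α - 1) / Real.Gamma (1 - α)) := by
      apply intervalIntegral.integral_congr
      intro s hs
      rw [uIcc_of_le ht.1.le] at hs
      have hmem2 : t - s ∈ Icc (0:ℝ) T := ⟨by linarith [hs.2], by linarith [hs.1, ht.2]⟩
      simp only [hvu (t - s) hmem2, hvu t htmem]
    rw [hJ, hut, hIBP]
    have hkII : IntervalIntegrable (fun s : ℝ => stdKernel (1 - α) s) volume 0 t := by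
      have heq : (fun s : ℝ => stdKernel (1 - α) s)
          = fun s : ℝ => s ^ (-α) / Real.Gamma (1 - α) := funext fun s => stdKernel_eq α s
      rw [heq]
      exact (intervalIntegral.intervalIntegrable_rpow' (by linarith)).div_const _
    have hcont2 : Continuous fun s : ℝ => H' (v (t - s)) * v' (t - s) :=
      ((hH'cont.comp (hvc.comp (continuous_const.sub continuous_id))).mul
        (hv'c.comp (continuous_const.sub continuous_id)))
    have hcont3 : Continuous fun s : ℝ => (H' (v t) - H' (v (t - s))) * v' (t - s) :=
      ((continuous_const.sub (hH'cont.comp (hvc.comp (continuous_const.sub continuous_id)))).mul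
        (hv'c.comp (continuous_const.sub continuous_id)))
    have int2 : IntervalIntegrable
        (fun s : ℝ => stdKernel (1 - α) s * (H' (v (t - s)) * v' (t - s))) volume 0 t :=
      hkII.mul_continuousOn hcont2.continuousOn
    have int3 : IntervalIntegrable
        (fun s : ℝ => (H' (v t) - H' (v (t - s))) * v' (t - s) * stdKernel (1 - α) s)
        volume 0 t := hkII.continuousOn_mul hcont3.continuousOn
    have hI : H' (v t) * (∫ s in (0:ℝ)..t, stdKernel (1 - α) s * v' (t - s))
        = (∫ s in (0:ℝ)..t, stdKernel (1 - α) s * (H' (v (t - s)) * v' (t - s)))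
          + ∫ s in (0:ℝ)..t, (H' (v t) - H' (v (t - s))) * v' (t - s) * stdKernel (1 - α) s := by
      rw [← intervalIntegral.integral_const_mul, ← intervalIntegral.integral_add int2 int3]
      apply intervalIntegral.integral_congr
      intro s _
      show H' (v t) * (stdKernel (1 - α) s * v' (t - s)) = _
      ring
    linear_combination hI
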